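/- arXiv:2009.12837 — 4 statements merged into one kernel-verified Lean document; each statement's English description precedes it below -/
import Mathlib

section
/- Let K > 0 and let h : [0,∞) → ℂ be differentiable with h'(t) = K(1 - h(t)²), |h(0)| < 1 and h(0) ≠ -1. Then there exist T > 0 and C > 0 such that |1 - h(t)| ≤ C·e^{-Kt} for all t ≥ T. -/
open Complex Set

theorem stmt_1 (K : ℝ) (hK : 0 < K) (h : ℝ → ℂ)
    (hderiv : ∀ t : ℝ, 0 ≤ t → HasDerivAt h ((K : ℂ) * (1 - h t ^ 2)) t)
    (h0lt : ‖h 0‖ < 1) (h0ne : h 0 ≠ -1) :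
    ∃ T > (0 : ℝ), ∃ C > (0 : ℝ), ∀ t ≥ T,
      ‖1 - h t‖ ≤ C * Real.exp (-K * t) := by
  -- extend h to a continuous function g on all of ℝ
  have hcont : ∀ t : ℝ, 0 ≤ t → ContinuousAt h t := fun t ht => (hderiv t ht).continuousAt
  set g : ℝ → ℂ := fun t => h (max t 0) with hgdef
  have hgc : Continuous g := by
    rw [continuous_iff_continuousAt]
    intro t
    have hi : ContinuousAt (fun s : ℝ => max s 0) t :=
      (continuous_id.max continuous_const).continuousAt
    exact ContinuousAt.comp (hcont _ (le_max_right t 0)) hi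
  have hgeq : ∀ t : ℝ, 0 ≤ t → g t = h t := fun t ht => by simp [hgdef, max_eq_left ht]
  -- the primitive I of g and the integrating factor y = exp(K⬝I)
  set I : ℝ → ℂ := fun t => ∫ s in (0:ℝ)..t, g s with hIdef
  have hIderiv : ∀ t : ℝ, HasDerivAt I (g t) t := fun t =>
    intervalIntegral.integral_hasDerivAt_right (hgc.intervalIntegrable _ _)
      (hgc.stronglyMeasurableAtFilter _ _) hgc.continuousAt
  set y : ℝ → ℂ := fun t => Complex.exp ((K:ℂ) * I t) with hydef
  have hyderiv : ∀ t : ℝ, HasDerivAt y ((K:ℂ) * g t * y t) t := by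
    intro t
    have := ((hIderiv t).const_mul (K:ℂ)).cexp
    simpa [hydef, mul_comm, mul_left_comm] using this
  have hyc : Continuous y := by
    rw [continuous_iff_continuousAt]; exact fun t => (hyderiv t).continuousAt
  have hy0 : y 0 = 1 := by simp [hydef, hIdef]
  have hyne : ∀ t, y t ≠ 0 := fun t => Complex.exp_ne_zero _
  -- derivative of g within Ici t
  have hgderiv : ∀ t : ℝ, 0 ≤ t → HasDerivWithinAt g ((K:ℂ) * (1 - h t ^ 2)) (Ici t) t := by
    intro t ht
    exact ((hderiv t ht).hasDerivWithinAt).congr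
      (fun s hs => hgeq s (le_trans ht hs)) (hgeq t ht)
  -- constancy principle
  have const0 : ∀ f : ℝ → ℂ, Continuous f →
      (∀ t : ℝ, 0 ≤ t → HasDerivWithinAt f 0 (Ici t) t) → ∀ t : ℝ, 0 ≤ t → f t = f 0 := by
    intro f hc hd t ht
    exact constant_of_has_deriv_right_zero (a := 0) (b := t) hc.continuousOn
      (fun x hx => hd x hx.1) t ⟨ht, le_refl t⟩
  -- the complex exponential e c t = exp(c t) and its derivative
  have hederiv : ∀ (c : ℂ) (t : ℝ),
      HasDerivAt (fun s : ℝ => Complex.exp (c * s)) (c * Complex.exp (c * t)) t := by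
    intro c t
    have h1 : HasDerivAt (fun s : ℝ => (s : ℂ)) 1 t := by
      simpa using (hasDerivAt_id t).ofReal_comp
    have := (h1.const_mul c).cexp
    simpa [mul_comm] using this
  -- Step A : (K (h t - 1) y t) e^{K t} is constant
  have hA : ∀ t : ℝ, 0 ≤ t →
      (K:ℂ) * (g t - 1) * y t * Complex.exp ((K:ℂ) * t) = (K:ℂ) * (h 0 - 1) := by
    intro t ht
    have h0 := const0 (fun t => (K:ℂ) * (g t - 1) * y t * Complex.exp ((K:ℂ) * t))
      (by fun_prop) ?_ t ht
    · have h0' : (K:ℂ) * (g t - 1) * y t * Complex.exp ((K:ℂ) * t)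
          = (K:ℂ) * (g 0 - 1) * y 0 * Complex.exp ((K:ℂ) * (0:ℝ)) := h0
      rw [h0']
      simp [hgeq 0 le_rfl, hy0]
    · intro s hs
      have h1 : HasDerivWithinAt (fun u => (K:ℂ) * (g u - 1))
          ((K:ℂ) * ((K:ℂ) * (1 - h s ^ 2))) (Ici s) s :=
        ((hgderiv s hs).sub_const 1).const_mul _
      have h2 := h1.mul (hyderiv s).hasDerivWithinAt
      have h3 := h2.mul ((hederiv (K:ℂ) s).hasDerivWithinAt)
      have heq : ((K:ℂ) * ((K:ℂ) * (1 - h s ^ 2)) * y s + (K:ℂ) * (g s - 1) * ((K:ℂ) * g s * y s))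
            * Complex.exp ((K:ℂ) * s)
          + (K:ℂ) * (g s - 1) * y s * ((K:ℂ) * Complex.exp ((K:ℂ) * s)) = 0 := by
        rw [hgeq s hs]; ring
      simp only [Pi.mul_apply] at h3
      rw [heq] at h3
      exact h3
  -- rewrite Step A : (1 - h t) y t = (1 - h 0) exp(-K t)
  have hA' : ∀ t : ℝ, 0 ≤ t →
      (1 - h t) * y t = (1 - h 0) * Complex.exp (-(K:ℂ) * t) := by
    intro t ht
    have := hA t ht
    rw [hgeq t ht] at this
    have hKne : (K:ℂ) ≠ 0 := by exact_mod_cast hK.ne'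
    have hexp : Complex.exp ((K:ℂ) * t) ≠ 0 := Complex.exp_ne_zero _
    have hEE : Complex.exp ((K:ℂ) * t) * Complex.exp (-(K:ℂ) * t) = 1 := by
      rw [← Complex.exp_add, show (K:ℂ) * t + -(K:ℂ) * t = 0 by ring, Complex.exp_zero]
    have hmain : (K:ℂ) * Complex.exp ((K:ℂ) * t) * ((1 - h t) * y t)
        = (K:ℂ) * Complex.exp ((K:ℂ) * t) * ((1 - h 0) * Complex.exp (-(K:ℂ) * t)) := by
      calc (K:ℂ) * Complex.exp ((K:ℂ) * t) * ((1 - h t) * y t)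
          = -((K:ℂ) * (h t - 1) * y t * Complex.exp ((K:ℂ) * t)) := by ring
        _ = -((K:ℂ) * (h 0 - 1)) := by rw [this]
        _ = (K:ℂ) * (1 - h 0) * 1 := by ring
        _ = (K:ℂ) * (1 - h 0) *
            (Complex.exp ((K:ℂ) * t) * Complex.exp (-(K:ℂ) * t)) := by rw [hEE]
        _ = (K:ℂ) * Complex.exp ((K:ℂ) * t) * ((1 - h 0) * Complex.exp (-(K:ℂ) * t)) := by
            ring
    exact mul_left_cancel₀ (mul_ne_zero hKne hexp) hmain
  -- Step B : y t e^{-K t} - B e^{-2K t} is constant, where B = (1 - h 0)/2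
  set B : ℂ := (1 - h 0) / 2 with hBdef
  have hB : ∀ t : ℝ, 0 ≤ t →
      y t * Complex.exp (-(K:ℂ) * t) - B * Complex.exp ((-2 * K : ℂ) * t) = 1 - B := by
    intro t ht
    have h0 := const0 (fun t => y t * Complex.exp (-(K:ℂ) * t) - B * Complex.exp ((-2 * K : ℂ) * t))
      (by fun_prop) ?_ t ht
    · have h0' : y t * Complex.exp (-(K:ℂ) * t) - B * Complex.exp ((-2 * K : ℂ) * t)
          = y 0 * Complex.exp (-(K:ℂ) * (0:ℝ)) - B * Complex.exp ((-2 * K : ℂ) * (0:ℝ)) := h0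
      rw [h0']
      simp [hy0]
    · intro s hs
      have h2 := ((hyderiv s).hasDerivWithinAt (s := Ici s)).mul ((hederiv (-(K:ℂ)) s).hasDerivWithinAt)
      have h3 := h2.sub (((hederiv ((-2 * K : ℂ)) s).hasDerivWithinAt).const_mul B)
      have heq : (K:ℂ) * g s * y s * Complex.exp (-(K:ℂ) * s)
            + y s * (-(K:ℂ) * Complex.exp (-(K:ℂ) * s))
            - B * ((-2 * K : ℂ) * Complex.exp ((-2 * K : ℂ) * s)) = 0 := by
        have e1 : Complex.exp (-(K:ℂ) * s) * Complex.exp (-(K:ℂ) * s)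
            = Complex.exp ((-2 * K : ℂ) * s) := by
          rw [← Complex.exp_add]; congr 1; push_cast; ring
        have e2 : ((K:ℂ) * (h s - 1)) * y s * Complex.exp (-(K:ℂ) * s)
            = (K:ℂ) * (h 0 - 1) * Complex.exp ((-2 * K : ℂ) * s) := by
          have := hA' s hs
          calc ((K:ℂ) * (h s - 1)) * y s * Complex.exp (-(K:ℂ) * s)
              = -(K:ℂ) * ((1 - h s) * y s) * Complex.exp (-(K:ℂ) * s) := by ring
            _ = -(K:ℂ) * ((1 - h 0) * Complex.exp (-(K:ℂ) * s)) * Complex.exp (-(K:ℂ) * s) := by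
                rw [this]
            _ = (K:ℂ) * (h 0 - 1) *
                (Complex.exp (-(K:ℂ) * s) * Complex.exp (-(K:ℂ) * s)) := by ring
            _ = (K:ℂ) * (h 0 - 1) * Complex.exp ((-2 * K : ℂ) * s) := by rw [e1]
        rw [hgeq s hs, hBdef]
        linear_combination e2
      rw [heq] at h3
      exact h3
  -- assemble the estimate
  set A : ℂ := 1 - B with hAdef
  have hAne : A ≠ 0 := by
    have hAform : A = (1 + h 0) / 2 := by rw [hAdef, hBdef]; ring
    rw [hAform]
    intro hc
    apply h0ne
    field_simp at hc
    linear_combination hc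
  set a : ℝ := ‖A‖ with hadef
  set b : ℝ := ‖B‖ with hbdef
  have ha : 0 < a := by simpa [hadef] using (norm_pos_iff.mpr hAne)
  refine ⟨max 1 ((2 * b / a) / (2 * K)), lt_of_lt_of_le one_pos (le_max_left _ _),
    (4 * b + 1) / a, by positivity, ?_⟩
  intro t ht
  have ht1 : (1:ℝ) ≤ t := le_trans (le_max_left _ _) ht
  have ht0 : (0:ℝ) ≤ t := by linarith
  -- lower bound on |y t|
  have hyeq := hB t ht0
  have habs1 : ‖Complex.exp (-(K:ℂ) * t)‖ = Real.exp (-K * t) := by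
    rw [show -(K:ℂ) * t = ((-K * t : ℝ) : ℂ) by push_cast; ring, Complex.norm_exp,
      Complex.ofReal_re]
  have habs2 : ‖Complex.exp ((-2 * K : ℂ) * t)‖ = Real.exp (-(2 * K) * t) := by
    rw [show (-2 * K : ℂ) * t = ((-(2 * K) * t : ℝ) : ℂ) by push_cast; ring, Complex.norm_exp,
      Complex.ofReal_re]
  have hsmall : b * Real.exp (-(2 * K) * t) ≤ a / 2 := by
    have h2kt : 2 * b / a ≤ 2 * K * t := by
      have := le_trans (le_max_right 1 ((2 * b / a) / (2 * K))) ht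
      calc 2 * b / a = (2 * b / a) / (2 * K) * (2 * K) := by field_simp
        _ ≤ t * (2 * K) := by nlinarith
        _ = 2 * K * t := by ring
    have hexp : 2 * K * t ≤ Real.exp (2 * K * t) := by
      have := Real.add_one_le_exp (2 * K * t); linarith
    have h1 : 2 * b / a ≤ Real.exp (2 * K * t) := le_trans h2kt hexp
    have h2 : Real.exp (-(2 * K) * t) = (Real.exp (2 * K * t))⁻¹ := by
      rw [← Real.exp_neg]; ring_nf
    rw [h2]
    rw [div_le_iff₀ ha] at h1
    have hpos : (0:ℝ) < Real.exp (2 * K * t) := Real.exp_pos _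
    rw [← div_eq_mul_inv, div_le_iff₀ hpos]
    nlinarith
  have hylow : a / 2 * Real.exp (K * t) ≤ ‖y t‖ := by
    have hsum : A + B * Complex.exp ((-2 * K : ℂ) * t) = y t * Complex.exp (-(K:ℂ) * t) := by
      linear_combination -hyeq
    have hge : a - b * Real.exp (-(2 * K) * t)
        ≤ ‖y t‖ * Real.exp (-K * t) := by
      calc a - b * Real.exp (-(2 * K) * t)
          = ‖A‖ - ‖B * Complex.exp ((-2 * K : ℂ) * t)‖ := by
            rw [norm_mul, habs2]
        _ ≤ ‖A + B * Complex.exp ((-2 * K : ℂ) * t)‖ := by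
            have := norm_sub_norm_le A (-(B * Complex.exp ((-2 * K : ℂ) * t)))
            simpa [sub_neg_eq_add] using this
        _ = ‖y t‖ * Real.exp (-K * t) := by
            rw [hsum, norm_mul, habs1]
    have hrel : Real.exp (-K * t) * Real.exp (K * t) = 1 := by
      rw [← Real.exp_add, show -K * t + K * t = 0 by ring, Real.exp_zero]
    have h1 : a / 2 ≤ ‖y t‖ * Real.exp (-K * t) := by linarith
    have h2 := mul_le_mul_of_nonneg_right h1 (Real.exp_pos (K * t)).le
    calc a / 2 * Real.exp (K * t) ≤ ‖y t‖ * Real.exp (-K * t) * Real.exp (K * t) := h2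
      _ = ‖y t‖ * (Real.exp (-K * t) * Real.exp (K * t)) := by ring
      _ = ‖y t‖ := by rw [hrel]; ring
  -- final bound
  have hfin := hA' t ht0
  have h2B : ‖1 - h 0‖ = 2 * b := by
    rw [hbdef, hBdef, norm_div, Complex.norm_two]; ring
  have habsfin : ‖1 - h t‖ * ‖y t‖ = 2 * b * Real.exp (-K * t) := by
    rw [← norm_mul, hfin, norm_mul, habs1, h2B]
  have hexpt : (1:ℝ) ≤ Real.exp (K * t) := by
    rw [show (1:ℝ) = Real.exp 0 from (Real.exp_zero).symm]
    exact Real.exp_le_exp.mpr (by positivity)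
  have hypos : 0 < ‖y t‖ := norm_pos_iff.mpr (hyne t)
  have hb0 : 0 ≤ b := norm_nonneg _
  have hCy : 2 * b ≤ (4 * b + 1) / a * ‖y t‖ := by
    have hC0 : 0 ≤ (4 * b + 1) / a := by positivity
    have s1 := mul_le_mul_of_nonneg_left hylow hC0
    have s2 : (4 * b + 1) / a * (a / 2 * Real.exp (K * t))
        = (4 * b + 1) / 2 * Real.exp (K * t) := by
      field_simp
    rw [s2] at s1
    nlinarith
  have key : ‖1 - h t‖ * ‖y t‖
      ≤ (4 * b + 1) / a * Real.exp (-K * t) * ‖y t‖ := by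
    rw [habsfin]
    have := mul_le_mul_of_nonneg_right hCy (Real.exp_pos (-K * t)).le
    nlinarith [Real.exp_pos (-K * t)]
  exact le_of_mul_le_mul_right key hypos
end

section
/- Let μ_c be the probability measure on the unit circle ∂B ⊂ ℂ with density proportional to exp((2/c)·Re x) with respect to arclength measure. Then μ_c converges weakly (in distribution) to the Dirac measure δ₁ at the point 1 as c → 0⁺. -/
open Real Filter Set Complex

private lemma contW (t : ℝ) : Continuous (fun θ : ℝ => Real.exp (t * Real.cos θ)) :=
  Real.continuous_exp.comp (continuous_const.mul Real.continuous_cos)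

/-- Dropping to a subinterval of a nonneg continuous function's integral. -/
private lemma sub_integral_le {f : ℝ → ℝ} (hc : Continuous f) (hnn : ∀ x, 0 ≤ f x)
    {a b : ℝ} (h1 : -π ≤ a) (h2 : a ≤ b) (h3 : b ≤ π) :
    (∫ x in a..b, f x) ≤ ∫ x in (-π)..π, f x := by
  have e1 := intervalIntegral.integral_add_adjacent_intervals (μ := MeasureTheory.volume)
    (hc.intervalIntegrable (-π) a) (hc.intervalIntegrable a π)
  have e2 := intervalIntegral.integral_add_adjacent_intervals (μ := MeasureTheory.volume)
    (hc.intervalIntegrable a b) (hc.intervalIntegrable b π)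
  have n1 : 0 ≤ ∫ x in (-π)..a, f x :=
    intervalIntegral.integral_nonneg h1 (fun x _ => hnn x)
  have n2 : 0 ≤ ∫ x in b..π, f x :=
    intervalIntegral.integral_nonneg h3 (fun x _ => hnn x)
  nlinarith [e1, e2]

private lemma main_tendsto (φ : ℂ → ℝ) (hφ : Continuous φ) (M : ℝ)
    (hM : ∀ x : ℂ, |φ x| ≤ M) :
    Tendsto (fun t : ℝ =>
        (∫ θ in (-π)..π, φ (Complex.exp (θ * Complex.I)) * Real.exp (t * Real.cos θ)) /
          (∫ θ in (-π)..π, Real.exp (t * Real.cos θ)))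
      atTop (nhds (φ 1)) := by
  set ψ : ℝ → ℝ := fun θ => φ (Complex.exp (θ * Complex.I)) with hψdef
  have hψ : Continuous ψ := hφ.comp (Complex.continuous_exp.comp
    ((Complex.continuous_ofReal).mul continuous_const))
  have hψ0 : ψ 0 = φ 1 := by simp [hψdef]
  have hM0 : 0 ≤ M := le_trans (abs_nonneg _) (hM 1)
  rw [Metric.tendsto_atTop]
  intro ε hε
  -- continuity of ψ at 0
  obtain ⟨δ₀, hδ₀, hδ₀'⟩ := Metric.continuousAt_iff.mp hψ.continuousAt (ε / 3)
    (by positivity)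
  set δ : ℝ := min (δ₀ / 2) (π / 2) with hδdef
  have hπ : (0:ℝ) < π := Real.pi_pos
  have hδpos : 0 < δ := lt_min (by linarith) (by linarith)
  have hδle : δ ≤ π / 2 := min_le_right _ _
  have hδpi : δ ≤ π := by linarith
  have hcoslt : Real.cos δ < Real.cos (δ / 2) :=
    Real.cos_lt_cos_of_nonneg_of_le_pi (by linarith) hδpi (by linarith)
  set a : ℝ := Real.cos δ - Real.cos (δ / 2) with hadef
  have ha : a < 0 := by simp [hadef]; linarith
  set C : ℝ := 4 * π * M / δ with hCdef
  have hC0 : 0 ≤ C := by positivity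
  -- the tail term tends to 0
  have htail : Tendsto (fun t : ℝ => C * Real.exp (t * a)) atTop (nhds 0) := by
    have h1 : Tendsto (fun t : ℝ => t * a) atTop atBot :=
      (tendsto_mul_const_atBot_of_neg ha).mpr tendsto_id
    have h2 : Tendsto (fun t : ℝ => Real.exp (t * a)) atTop (nhds 0) :=
      Real.tendsto_exp_atBot.comp h1
    simpa using h2.const_mul C
  have hev : ∀ᶠ t : ℝ in atTop, C * Real.exp (t * a) < ε / 3 :=
    htail.eventually_lt_const (by positivity)
  obtain ⟨N, hN⟩ := eventually_atTop.mp hev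
  refine ⟨max N 0, fun t ht => ?_⟩
  have htN : N ≤ t := le_trans (le_max_left _ _) ht
  have ht0 : (0:ℝ) ≤ t := le_trans (le_max_right _ _) ht
  set w : ℝ → ℝ := fun θ => Real.exp (t * Real.cos θ) with hwdef
  have hwc : Continuous w := contW t
  have hwpos : ∀ x, 0 < w x := fun x => Real.exp_pos _
  have hwnn : ∀ x, 0 ≤ w x := fun x => (hwpos x).le
  set Γt : ℝ := ∫ θ in (-π)..π, w θ with hΓtdef
  set It : ℝ := ∫ θ in (-π)..π, ψ θ * w θ with hItdef
  -- lower bound for Γt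
  have hcoshalf : ∀ x ∈ Icc (-(δ/2)) (δ/2), Real.cos (δ/2) ≤ Real.cos x := by
    intro x hx
    have h1 : |x| ≤ δ / 2 := abs_le.mpr ⟨hx.1, hx.2⟩
    have := Real.cos_le_cos_of_nonneg_of_le_pi (abs_nonneg x) (by linarith) h1
    rwa [Real.cos_abs] at this
  have hΓlow : δ * Real.exp (t * Real.cos (δ / 2)) ≤ Γt := by
    have step1 : δ * Real.exp (t * Real.cos (δ / 2)) ≤ ∫ x in (-(δ/2))..(δ/2), w x := by
      have := intervalIntegral.integral_mono_on (μ := MeasureTheory.volume)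
        (a := -(δ/2)) (b := δ/2)
        (f := fun _ : ℝ => Real.exp (t * Real.cos (δ / 2))) (g := w)
        (by linarith) (intervalIntegrable_const) (hwc.intervalIntegrable _ _)
        (fun x hx => Real.exp_le_exp.mpr (mul_le_mul_of_nonneg_left (hcoshalf x hx) ht0))
      rw [intervalIntegral.integral_const] at this
      have : (δ/2 - -(δ/2)) * Real.exp (t * Real.cos (δ / 2)) ≤
          ∫ x in (-(δ/2))..(δ/2), w x := by simpa [smul_eq_mul] using this
      calc δ * Real.exp (t * Real.cos (δ / 2))
          = (δ/2 - -(δ/2)) * Real.exp (t * Real.cos (δ / 2)) := by ring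
        _ ≤ _ := this
    exact le_trans step1 (sub_integral_le hwc hwnn (by linarith) (by linarith) (by linarith))
  have hΓpos : 0 < Γt := lt_of_lt_of_le (by positivity) hΓlow
  -- rewrite the difference
  set J : ℝ := ∫ θ in (-π)..π, (ψ θ - φ 1) * w θ with hJdef
  have hJ : J = It - φ 1 * Γt := by
    have : (fun θ => (ψ θ - φ 1) * w θ) = fun θ => ψ θ * w θ - φ 1 * w θ := by
      funext θ; ring
    rw [hJdef, this, intervalIntegral.integral_sub (f := fun θ => ψ θ * w θ) (g := fun θ => φ 1 * w θ)
      ((hψ.mul hwc).intervalIntegrable _ _)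
      ((continuous_const.mul hwc).intervalIntegrable _ _),
      intervalIntegral.integral_const_mul]
  have hdiff : It / Γt - φ 1 = J / Γt := by
    rw [hJ, sub_div, mul_div_assoc, div_self hΓpos.ne', mul_one]
  -- bound |J|
  have habsJ : |J| ≤ ∫ θ in (-π)..π, |ψ θ - φ 1| * w θ := by
    have h1 : |J| ≤ ∫ θ in (-π)..π, |(ψ θ - φ 1) * w θ| :=
      intervalIntegral.abs_integral_le_integral_abs (by linarith)
    have h2 : (fun θ => |(ψ θ - φ 1) * w θ|) = fun θ => |ψ θ - φ 1| * w θ := by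
      funext θ; rw [abs_mul, abs_of_pos (hwpos θ)]
    rwa [h2] at h1
  set g : ℝ → ℝ := fun θ => |ψ θ - φ 1| * w θ with hgdef
  have hgc : Continuous g := ((hψ.sub continuous_const).abs).mul hwc
  have hgnn : ∀ x, 0 ≤ g x := fun x => mul_nonneg (abs_nonneg _) (hwnn x)
  -- split at ±δ
  have hsplit : (∫ θ in (-π)..π, g θ) =
      (∫ θ in (-π)..(-δ), g θ) + (∫ θ in (-δ)..δ, g θ) + (∫ θ in δ..π, g θ) := by
    rw [← intervalIntegral.integral_add_adjacent_intervals
      (hgc.intervalIntegrable (-π) (-δ)) (hgc.intervalIntegrable (-δ) π),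
      ← intervalIntegral.integral_add_adjacent_intervals
      (hgc.intervalIntegrable (-δ) δ) (hgc.intervalIntegrable δ π)]
    ring
  -- middle bound
  have hmid : (∫ θ in (-δ)..δ, g θ) ≤ (ε / 3) * Γt := by
    have step1 : (∫ θ in (-δ)..δ, g θ) ≤ ∫ θ in (-δ)..δ, (ε / 3) * w θ := by
      apply intervalIntegral.integral_mono_on (by linarith)
        (hgc.intervalIntegrable _ _) ((continuous_const.mul hwc).intervalIntegrable _ _)
      intro x hx
      have hx' : |x| ≤ δ := abs_le.mpr ⟨hx.1, hx.2⟩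
      have hdx : dist x 0 < δ₀ := by
        rw [Real.dist_eq, sub_zero]
        calc |x| ≤ δ := hx'
          _ ≤ δ₀ / 2 := min_le_left _ _
          _ < δ₀ := by linarith
      have := hδ₀' hdx
      rw [Real.dist_eq, hψ0] at this
      exact mul_le_mul_of_nonneg_right this.le (hwnn x)
    rw [intervalIntegral.integral_const_mul] at step1
    exact le_trans step1 (mul_le_mul_of_nonneg_left
      (sub_integral_le hwc hwnn (by linarith) (by linarith) (by linarith))
      (by positivity))
  -- tail bounds
  have hbnd : ∀ x, |ψ x - φ 1| ≤ 2 * M := by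
    intro x
    calc |ψ x - φ 1| ≤ |ψ x| + |φ 1| := abs_sub _ _
      _ ≤ M + M := add_le_add (hM _) (hM _)
      _ = 2 * M := by ring
  have htailbound : ∀ b₁ b₂ : ℝ, b₁ ≤ b₂ → (∀ x ∈ Icc b₁ b₂, Real.cos x ≤ Real.cos δ) →
      (∫ θ in b₁..b₂, g θ) ≤ (b₂ - b₁) * (2 * M * Real.exp (t * Real.cos δ)) := by
    intro b₁ b₂ hb hcos
    have step1 : (∫ θ in b₁..b₂, g θ) ≤
        ∫ _ in b₁..b₂, 2 * M * Real.exp (t * Real.cos δ) := by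
      apply intervalIntegral.integral_mono_on hb (hgc.intervalIntegrable _ _)
        intervalIntegrable_const
      intro x hx
      have h1 : w x ≤ Real.exp (t * Real.cos δ) :=
        Real.exp_le_exp.mpr (mul_le_mul_of_nonneg_left (hcos x hx) ht0)
      calc g x ≤ (2 * M) * w x := mul_le_mul_of_nonneg_right (hbnd x) (hwnn x)
        _ ≤ 2 * M * Real.exp (t * Real.cos δ) :=
          mul_le_mul_of_nonneg_left h1 (by positivity)
    rwa [intervalIntegral.integral_const, smul_eq_mul] at step1
  have hright : (∫ θ in δ..π, g θ) ≤ π * (2 * M * Real.exp (t * Real.cos δ)) := by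
    have := htailbound δ π hδpi (fun x hx =>
      Real.cos_le_cos_of_nonneg_of_le_pi (by linarith) hx.2 hx.1)
    calc (∫ θ in δ..π, g θ) ≤ (π - δ) * (2 * M * Real.exp (t * Real.cos δ)) := this
      _ ≤ π * (2 * M * Real.exp (t * Real.cos δ)) := by
          apply mul_le_mul_of_nonneg_right (by linarith) (by positivity)
  have hleft : (∫ θ in (-π)..(-δ), g θ) ≤ π * (2 * M * Real.exp (t * Real.cos δ)) := by
    have hcos : ∀ x ∈ Icc (-π) (-δ), Real.cos x ≤ Real.cos δ := by
      intro x hx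
      have h1 : δ ≤ -x := by linarith [hx.2]
      have h2 : -x ≤ π := by linarith [hx.1]
      have := Real.cos_le_cos_of_nonneg_of_le_pi (by linarith) h2 h1
      rwa [Real.cos_neg] at this
    have := htailbound (-π) (-δ) (by linarith) hcos
    calc (∫ θ in (-π)..(-δ), g θ) ≤ (-δ - -π) * (2 * M * Real.exp (t * Real.cos δ)) := this
      _ ≤ π * (2 * M * Real.exp (t * Real.cos δ)) := by
          apply mul_le_mul_of_nonneg_right (by linarith) (by positivity)
  -- total bound on |J|
  have hJbound : |J| ≤ (ε / 3) * Γt + 4 * π * M * Real.exp (t * Real.cos δ) := by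
    calc |J| ≤ ∫ θ in (-π)..π, g θ := habsJ
      _ = _ := hsplit
      _ ≤ π * (2 * M * Real.exp (t * Real.cos δ)) + (ε / 3) * Γt +
          π * (2 * M * Real.exp (t * Real.cos δ)) := by
            exact add_le_add (add_le_add hleft hmid) hright
      _ = (ε / 3) * Γt + 4 * π * M * Real.exp (t * Real.cos δ) := by ring
  -- tail / Γt bound
  have htail2 : 4 * π * M * Real.exp (t * Real.cos δ) / Γt ≤ C * Real.exp (t * a) := by
    have heq : C * Real.exp (t * a) =
        4 * π * M * Real.exp (t * Real.cos δ) / (δ * Real.exp (t * Real.cos (δ / 2))) := by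
      rw [hadef, hCdef]
      rw [mul_sub, Real.exp_sub]
      field_simp
    rw [heq]
    apply div_le_div_of_nonneg_left (by positivity) (by positivity) hΓlow
  -- conclude
  rw [Real.dist_eq, hdiff, abs_div, abs_of_pos hΓpos]
  have hfin : |J| / Γt ≤ ε / 3 + C * Real.exp (t * a) := by
    calc |J| / Γt ≤ ((ε / 3) * Γt + 4 * π * M * Real.exp (t * Real.cos δ)) / Γt := by gcongr
      _ = ε / 3 + 4 * π * M * Real.exp (t * Real.cos δ) / Γt := by
          rw [add_div, mul_div_assoc, div_self hΓpos.ne', mul_one]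
      _ ≤ ε / 3 + C * Real.exp (t * a) := by linarith [htail2]
  have := hN t htN
  linarith

theorem stmt_9
    (Γ : ℝ → ℝ) (hΓ : ∀ c : ℝ, Γ c = ∫ θ in (-π)..π, Real.exp ((2 / c) * Real.cos θ)) :
    ∀ φ : ℂ → ℝ, Continuous φ → (∃ M : ℝ, ∀ x : ℂ, |φ x| ≤ M) →
      Tendsto
        (fun c : ℝ =>
          (∫ θ in (-π)..π, φ (Complex.exp (θ * Complex.I)) *
            Real.exp ((2 / c) * Real.cos θ)) / Γ c)
        (nhdsWithin 0 (Ioi 0)) (nhds (φ 1)) := by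
  intro φ hφ ⟨M, hM⟩
  have hmain := main_tendsto φ hφ M hM
  have hcomp : Tendsto (fun c : ℝ => 2 / c) (nhdsWithin 0 (Ioi 0)) atTop := by
    have := tendsto_inv_nhdsGT_zero (𝕜 := ℝ)
    have h2 := this.const_mul_atTop (r := (2:ℝ)) two_pos
    simpa [div_eq_mul_inv] using h2
  have := hmain.comp hcomp
  convert this using 1
  funext c
  rw [hΓ c]
  rfl
end

section
/- Let μ_c be the probability measure on [-π, π] with density exp((2/c)cos θ)/Γ_c. For every open neighborhood U of 0 in [-π, π], μ_c(Uᶜ) → 0 as c → 0⁺. -/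
open Real Filter Set
open MeasureTheory

theorem stmt_10
    (Γ : ℝ → ℝ) (hΓ : ∀ c : ℝ, Γ c = ∫ θ in Icc (-π) π, Real.exp ((2 / c) * Real.cos θ))
    (U : Set ℝ) (hU : ∃ V : Set ℝ, IsOpen V ∧ U = V ∩ Icc (-π) π) (h0U : (0 : ℝ) ∈ U) :
    Tendsto
      (fun c : ℝ =>
        (∫ θ in Icc (-π) π \ U, Real.exp ((2 / c) * Real.cos θ)) / Γ c)
      (nhdsWithin 0 (Ioi 0)) (nhds 0) := by
  obtain ⟨V, hVopen, hUeq⟩ := hU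
  have h0V : (0 : ℝ) ∈ V := (hUeq ▸ h0U).1
  obtain ⟨ε, hε, hball⟩ := Metric.isOpen_iff.1 hVopen 0 h0V
  set δ : ℝ := min ε π with hδdef
  have hδ0 : 0 < δ := lt_min hε Real.pi_pos
  have hδπ : δ ≤ π := min_le_right _ _
  have hcoslt : Real.cos δ < Real.cos (δ / 2) :=
    Real.cos_lt_cos_of_nonneg_of_le_pi (by linarith) hδπ (by linarith)
  have hcont : ∀ c : ℝ, Continuous fun θ => Real.exp ((2 / c) * Real.cos θ) :=
    fun c => Real.continuous_exp.comp (continuous_const.mul Real.continuous_cos)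
  have hint : ∀ c, IntegrableOn (fun θ => Real.exp ((2 / c) * Real.cos θ)) (Icc (-π) π) :=
    fun c => (hcont c).integrableOn_Icc
  have hUmeas : MeasurableSet U := hUeq ▸ hVopen.measurableSet.inter measurableSet_Icc
  have hSmeas : MeasurableSet (Icc (-π) π \ U) := measurableSet_Icc.diff hUmeas
  have hSsub : Icc (-π) π \ U ⊆ Icc (-π) π := diff_subset
  have hptS : ∀ θ ∈ Icc (-π) π \ U, Real.cos θ ≤ Real.cos δ := by
    rintro θ ⟨hθI, hθU⟩
    have habs : δ ≤ |θ| := by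
      by_contra h
      push_neg at h
      apply hθU
      rw [hUeq]
      refine ⟨hball ?_, hθI⟩
      simpa [Real.dist_eq] using lt_of_lt_of_le h (min_le_left _ _)
    calc Real.cos θ = Real.cos |θ| := (Real.cos_abs θ).symm
      _ ≤ Real.cos δ :=
        Real.cos_le_cos_of_nonneg_of_le_pi (le_of_lt hδ0)
          (abs_le.2 ⟨hθI.1, hθI.2⟩) habs
  have hnum_le : ∀ c : ℝ, 0 < c →
      (∫ θ in Icc (-π) π \ U, Real.exp ((2 / c) * Real.cos θ))
        ≤ 2 * π * Real.exp ((2 / c) * Real.cos δ) := by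
    intro c hc
    have hintS := (hint c).mono_set hSsub
    have hvolS : volume (Icc (-π) π \ U) < ⊤ :=
      lt_of_le_of_lt (measure_mono hSsub)
        (by rw [Real.volume_Icc]; exact ENNReal.ofReal_lt_top)
    have hconstS : IntegrableOn (fun _ : ℝ => Real.exp ((2 / c) * Real.cos δ))
        (Icc (-π) π \ U) := integrableOn_const hvolS.ne
    calc (∫ θ in Icc (-π) π \ U, Real.exp ((2 / c) * Real.cos θ))
        ≤ ∫ _θ in Icc (-π) π \ U, Real.exp ((2 / c) * Real.cos δ) := by
          refine setIntegral_mono_on hintS hconstS hSmeas ?_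
          intro θ hθ
          exact Real.exp_le_exp.2
            (mul_le_mul_of_nonneg_left (hptS θ hθ) (by positivity))
      _ = (volume (Icc (-π) π \ U)).toReal * Real.exp ((2 / c) * Real.cos δ) := by
          rw [setIntegral_const, smul_eq_mul, measureReal_def]
      _ ≤ 2 * π * Real.exp ((2 / c) * Real.cos δ) := by
          refine mul_le_mul_of_nonneg_right ?_ (Real.exp_nonneg _)
          have h1 : volume (Icc (-π) π \ U) ≤ ENNReal.ofReal (π - -π) := by
            rw [← Real.volume_Icc]; exact measure_mono hSsub
          calc (volume (Icc (-π) π \ U)).toReal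
              ≤ (ENNReal.ofReal (π - -π)).toReal :=
                ENNReal.toReal_mono ENNReal.ofReal_ne_top h1
            _ = π - -π := ENNReal.toReal_ofReal (by linarith [Real.pi_pos])
            _ = 2 * π := by ring
  have hΓ_ge : ∀ c : ℝ, 0 < c →
      δ * Real.exp ((2 / c) * Real.cos (δ / 2)) ≤ Γ c := by
    intro c hc
    rw [hΓ]
    have hsub2 : Icc (-(δ / 2)) (δ / 2) ⊆ Icc (-π) π :=
      Icc_subset_Icc (by linarith) (by linarith)
    have hvol2 : volume (Icc (-(δ / 2)) (δ / 2)) = ENNReal.ofReal δ := by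
      rw [Real.volume_Icc]; congr 1; ring
    have hconst2 : IntegrableOn (fun _ : ℝ => Real.exp ((2 / c) * Real.cos (δ / 2)))
        (Icc (-(δ / 2)) (δ / 2)) :=
      integrableOn_const (by rw [hvol2]; exact ENNReal.ofReal_ne_top)
    have step1 : δ * Real.exp ((2 / c) * Real.cos (δ / 2))
        ≤ ∫ θ in Icc (-(δ / 2)) (δ / 2), Real.exp ((2 / c) * Real.cos θ) := by
      have hmono : (∫ _θ in Icc (-(δ / 2)) (δ / 2), Real.exp ((2 / c) * Real.cos (δ / 2)))
          ≤ ∫ θ in Icc (-(δ / 2)) (δ / 2), Real.exp ((2 / c) * Real.cos θ) := by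
        refine setIntegral_mono_on hconst2 ((hint c).mono_set hsub2) measurableSet_Icc ?_
        intro θ hθ
        refine Real.exp_le_exp.2 (mul_le_mul_of_nonneg_left ?_ (by positivity))
        have habs : |θ| ≤ δ / 2 := abs_le.2 ⟨by linarith [hθ.1], hθ.2⟩
        calc Real.cos (δ / 2) ≤ Real.cos |θ| :=
              Real.cos_le_cos_of_nonneg_of_le_pi (abs_nonneg θ) (by linarith) habs
          _ = Real.cos θ := Real.cos_abs θ
      calc δ * Real.exp ((2 / c) * Real.cos (δ / 2))
          = ∫ _θ in Icc (-(δ / 2)) (δ / 2), Real.exp ((2 / c) * Real.cos (δ / 2)) := by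
            rw [setIntegral_const, smul_eq_mul, measureReal_def, hvol2,
              ENNReal.toReal_ofReal (le_of_lt hδ0)]
        _ ≤ _ := hmono
    refine le_trans step1 ?_
    refine setIntegral_mono_set (hint c) ?_ (HasSubset.Subset.eventuallyLE hsub2)
    filter_upwards with θ using Real.exp_nonneg _
  have hnum_nonneg : ∀ c : ℝ,
      0 ≤ ∫ θ in Icc (-π) π \ U, Real.exp ((2 / c) * Real.cos θ) := by
    intro c
    exact setIntegral_nonneg hSmeas fun θ _ => Real.exp_nonneg _
  -- the dominating function
  have hg : Tendsto (fun c : ℝ =>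
      2 * π / δ * Real.exp ((2 / c) * (Real.cos δ - Real.cos (δ / 2))))
      (nhdsWithin 0 (Ioi 0)) (nhds 0) := by
    have h1 : Tendsto (fun c : ℝ => 2 / c) (nhdsWithin 0 (Ioi 0)) atTop := by
      have := tendsto_inv_nhdsGT_zero.const_mul_atTop (show (0:ℝ) < 2 by norm_num)
      simpa [div_eq_mul_inv] using this
    have h2 : Tendsto (fun c : ℝ => (2 / c) * (Real.cos δ - Real.cos (δ / 2)))
        (nhdsWithin 0 (Ioi 0)) atBot :=
      h1.atTop_mul_const_of_neg (by linarith)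
    have h3 := (Real.tendsto_exp_atBot.comp h2).const_mul (2 * π / δ)
    simpa using h3
  refine squeeze_zero' ?_ ?_ hg
  · filter_upwards [self_mem_nhdsWithin] with c hc
    have hΓpos : 0 < Γ c :=
      lt_of_lt_of_le (by positivity) (hΓ_ge c hc)
    exact div_nonneg (hnum_nonneg c) (le_of_lt hΓpos)
  · filter_upwards [self_mem_nhdsWithin] with c hc
    have hc : (0:ℝ) < c := hc
    have hd : 0 < δ * Real.exp ((2 / c) * Real.cos (δ / 2)) := by positivity
    have hb : (0:ℝ) ≤ 2 * π * Real.exp ((2 / c) * Real.cos δ) := by positivity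
    have key : (∫ θ in Icc (-π) π \ U, Real.exp ((2 / c) * Real.cos θ)) / Γ c
        ≤ (2 * π * Real.exp ((2 / c) * Real.cos δ)) /
          (δ * Real.exp ((2 / c) * Real.cos (δ / 2))) :=
      div_le_div₀ hb (hnum_le c hc) hd (hΓ_ge c hc)
    refine key.trans (le_of_eq ?_)
    rw [mul_sub, Real.exp_sub, div_mul_div_comm]
end

section
/- Let K > 0 and let h, g : [0,∞) → ℂ be C¹ functions with h(t), g(t) in the closed unit ball, satisfying the coupled difference identity |h(t) - g(t)|² = |h(0) - g(0)|²·exp(-2K∫₀ᵗ Re(h(s) + g(s)) ds), together with |h(t)|² = (|h(0)|² - 1)·exp(-2K∫₀ᵗ Re h(s) ds) + 1 with |h(0)| < 1. If ∫₀ᵗ Re g(s) ds → +∞ as t → ∞, then |h(t) - g(t)| → 0 as t → ∞. -/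
open Filter

theorem stmt_16 (K : ℝ) (hK : 0 < K) (h g : ℝ → ℂ)
    (hC1 : ContDiff ℝ 1 h) (gC1 : ContDiff ℝ 1 g)
    (hball : ∀ t : ℝ, 0 ≤ t → ‖h t‖ ≤ 1)
    (gball : ∀ t : ℝ, 0 ≤ t → ‖g t‖ ≤ 1)
    (hdiff : ∀ t : ℝ, 0 ≤ t →
      ‖h t - g t‖ ^ 2 =
        ‖h 0 - g 0‖ ^ 2 *
          Real.exp (-2 * K * ∫ s in (0 : ℝ)..t, (h s + g s).re))
    (hmod : ∀ t : ℝ, 0 ≤ t →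
      ‖h t‖ ^ 2 =
        (‖h 0‖ ^ 2 - 1) *
          Real.exp (-2 * K * ∫ s in (0 : ℝ)..t, (h s).re) + 1)
    (h0 : ‖h 0‖ < 1)
    (hint : Tendsto (fun t : ℝ => ∫ s in (0 : ℝ)..t, (g s).re) atTop atTop) :
    Tendsto (fun t : ℝ => ‖h t - g t‖) atTop (nhds 0) := by
  have hconth : Continuous fun s : ℝ => (h s).re :=
    Complex.continuous_re.comp hC1.continuous
  have hcontg : Continuous fun s : ℝ => (g s).re :=
    Complex.continuous_re.comp gC1.continuous
  have h0sq : ‖h 0‖ ^ 2 < 1 := by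
    have := norm_nonneg (h 0)
    nlinarith
  set C : ℝ := ‖h 0 - g 0‖ ^ 2 / (1 - ‖h 0‖ ^ 2) with hC
  have hpos : 0 < 1 - ‖h 0‖ ^ 2 := by linarith
  have hCnn : 0 ≤ C := by positivity
  -- key bound: for t ≥ 0, |h t - g t|^2 ≤ C * exp (-2K ∫ Re g)
  have key : ∀ t : ℝ, 0 ≤ t →
      ‖h t - g t‖ ^ 2 ≤
        C * Real.exp (-2 * K * ∫ s in (0 : ℝ)..t, (g s).re) := by
    intro t ht
    have hsplit : (∫ s in (0 : ℝ)..t, (h s + g s).re) =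
        (∫ s in (0 : ℝ)..t, (h s).re) + ∫ s in (0 : ℝ)..t, (g s).re := by
      rw [← intervalIntegral.integral_add (hconth.intervalIntegrable 0 t)
        (hcontg.intervalIntegrable 0 t)]
      simp [Complex.add_re]
    have hE : Real.exp (-2 * K * ∫ s in (0 : ℝ)..t, (h s).re) ≤
        1 / (1 - ‖h 0‖ ^ 2) := by
      have hm := hmod t ht
      have hnn : (0 : ℝ) ≤ ‖h t‖ ^ 2 := by positivity
      rw [le_div_iff₀ (by linarith)]
      nlinarith
    rw [hdiff t ht, hsplit, mul_add, Real.exp_add, hC, div_mul_eq_mul_div,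
      le_div_iff₀ hpos]
    nlinarith [Real.exp_nonneg (-2 * K * ∫ s in (0 : ℝ)..t, (g s).re),
      Real.exp_nonneg (-2 * K * ∫ s in (0 : ℝ)..t, (h s).re),
      sq_nonneg (‖h 0 - g 0‖),
      mul_le_mul_of_nonneg_right ((le_div_iff₀ hpos).mp hE)
        (mul_nonneg (sq_nonneg (‖h 0 - g 0‖))
          (Real.exp_nonneg (-2 * K * ∫ s in (0 : ℝ)..t, (g s).re)))]
  -- RHS tends to 0
  have hRHS : Tendsto (fun t : ℝ =>
      C * Real.exp (-2 * K * ∫ s in (0 : ℝ)..t, (g s).re)) atTop (nhds 0) := by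
    have h1 : Tendsto (fun t : ℝ =>
        -2 * K * ∫ s in (0 : ℝ)..t, (g s).re) atTop atBot := by
      apply Tendsto.const_mul_atTop_of_neg (by linarith) hint
    have h2 := (Real.tendsto_exp_atBot).comp h1
    simpa using h2.const_mul C
  -- squeeze on the square
  have hsq : Tendsto (fun t : ℝ => ‖h t - g t‖ ^ 2) atTop (nhds 0) := by
    apply squeeze_zero_norm' _ hRHS
    filter_upwards [eventually_ge_atTop (0 : ℝ)] with t ht
    rw [Real.norm_eq_abs, abs_of_nonneg (by positivity)]
    exact key t ht
  have := (Real.continuous_sqrt.tendsto 0).comp hsq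
  simp only [Real.sqrt_zero, Function.comp_def, Real.sqrt_sq_eq_abs,
    abs_of_nonneg (norm_nonneg _)] at this
  exact this
end
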